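/- For the hyperlogarithm generalization H, if x = ∞ then H(a₀ | a₁,...,a_n ‖ ∞ | a_{n+1}) equals the standard hyperlogarithm I(a₀ | a₁,...,a_n | a_{n+1}); and for finite x (distinct from all a_i and the endpoints), H(a₀ | a₁,...,a_n ‖ x | a_{n+1}) = I(1/(a₀−x) | 1/(a₁−x), ..., 1/(a_n−x) | 1/(a_{n+1}−x)). -/

import Mathlib

open MeasureTheory intervalIntegral

/-- Chen iterated integral `∫ η₁ ∘ ⋯ ∘ η_n` along the path `γ` (restricted to `[0, t]`),
where the list gives the forms `f(z) dz` in reverse order (head = outermost form `η_n`),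
defined by the recursion
`∫_γ η₁∘⋯∘η_n = ∫_0^t (∫_{γ|[0,u]} η₁∘⋯∘η_{n-1}) · η_n(γ(u)) γ'(u) du`. -/
noncomputable def iterInt (γ : ℝ → ℂ) : List (ℂ → ℂ) → ℝ → ℂ
  | [], _ => 1
  | f :: fs, t => ∫ u in (0 : ℝ)..t, iterInt γ fs u * (f (γ u) * deriv γ u)

/-- The differential form `ω(a, x)` of the generalised hyperlogarithm, with `x = none`
encoding `x = ∞` (where `ω(a, ∞)(t) = 1/(t − a)` is the standard hyperlogarithm form). -/
noncomputable def omegaG (a : ℂ) : Option ℂ → ℂ → ℂ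
  | none => fun t => 1 / (t - a)
  | some x => fun t => (a - x) / ((t - a) * (t - x))

/-- Dan's generalised hyperlogarithm
`H(a₀ | a₁,…,a_n ‖ x | a_{n+1}) = ∫_{a₀}^{a_{n+1}} ω(a₁,x)∘⋯∘ω(a_n,x)`
along a path `γ` from `a₀` to `a_{n+1}`. -/
noncomputable def hyperH (γ : ℝ → ℂ) (as : List ℂ) (x : Option ℂ) : ℂ :=
  iterInt γ (as.map (fun a => omegaG a x)) 1

/-- The standard hyperlogarithm `I(a₀ | a₁,…,a_n | a_{n+1})` along a path `γ`. -/
noncomputable def hyperI (γ : ℝ → ℂ) (as : List ℂ) : ℂ :=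
  iterInt γ (as.map (fun a => fun t => 1 / (t - a))) 1

lemma iterInt_transform (γ : ℝ → ℂ) (hγ : ContDiff ℝ 1 γ) (x : ℂ)
    (hγx : ∀ u ∈ Set.Icc (0 : ℝ) 1, γ u ≠ x) (l : List ℂ) :
    (∀ a ∈ l, a ≠ x) → ∀ t ∈ Set.Icc (0 : ℝ) 1,
      iterInt (fun u => 1 / (γ u - x))
          (l.map (fun a => fun z => 1 / (z - 1 / (a - x)))) t
        = iterInt γ (l.map (fun a => omegaG a (some x))) t := by
  induction l with
  | nil => intro _ t _; rfl
  | cons a l ih =>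
    intro hl t ht
    simp only [List.map_cons, iterInt]
    apply intervalIntegral.integral_congr
    intro u hu
    have hu' : u ∈ Set.Icc (0 : ℝ) 1 := by
      rw [Set.uIcc_of_le ht.1] at hu
      exact ⟨hu.1, hu.2.trans ht.2⟩
    have hgx : γ u - x ≠ 0 := sub_ne_zero.mpr (hγx u hu')
    have hax : a - x ≠ 0 := sub_ne_zero.mpr (hl a List.mem_cons_self)
    have hd : HasDerivAt (fun v => 1 / (γ v - x)) (-(deriv γ u) / (γ u - x) ^ 2) u := by
      have h1 : HasDerivAt (fun v => γ v - x) (deriv γ u) u :=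
        ((hγ.differentiable one_ne_zero u).hasDerivAt).sub_const x
      have h2 := (hasDerivAt_const u (1 : ℂ)).div h1 hgx
      exact h2.congr_deriv (by ring)
    dsimp only
    rw [ih (fun b hb => hl b (List.mem_cons_of_mem a hb)) u hu', hd.deriv]
    congr 1
    by_cases hga : γ u = a
    · simp [omegaG, hga]
    · have hga' : γ u - a ≠ 0 := sub_ne_zero.mpr hga
      have hag : a - γ u ≠ 0 := sub_ne_zero.mpr (Ne.symm hga)
      simp only [omegaG]
      field_simp
      ring_nf
      rw [neg_add_eq_sub, ← sub_mul, ← mul_sub, mul_assoc, neg_add_eq_sub, mul_inv_cancel₀ hag,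
        mul_one]

/-- If `x = ∞` then `H(a₀ | a₁,…,a_n ‖ ∞ | a_{n+1}) = I(a₀ | a₁,…,a_n | a_{n+1})`; and for
finite `x` distinct from all the `a_i`,
`H(a₀ | a₁,…,a_n ‖ x | a_{n+1}) = I(1/(a₀−x) | 1/(a₁−x),…,1/(a_n−x) | 1/(a_{n+1}−x))`,
the latter computed along the transformed path `u ↦ 1/(γ(u) − x)`.  Here
`γ : [0,1] → ℂ` is a `C¹` path from `a₀` to `a_{n+1}` avoiding `a₁, …, a_n` (in its
interior) and avoiding `x`, with the convergence conditions `a₀ ∉ {a₁, x}`,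
`a_{n+1} ∉ {a_n, x}`. -/
theorem hyperH_eq_hyperI (n : ℕ) (a : Fin (n + 2) → ℂ) (x : ℂ) (γ : ℝ → ℂ)
    (hγ : ContDiff ℝ 1 γ)
    (hstart : γ 0 = a 0) (hend : γ 1 = a (Fin.last (n + 1)))
    (hx : ∀ i, a i ≠ x)
    (hγx : ∀ u ∈ Set.Icc (0 : ℝ) 1, γ u ≠ x)
    (hγa : ∀ u ∈ Set.Ioo (0 : ℝ) 1, ∀ i : Fin n, γ u ≠ a i.succ.castSucc)
    (h01 : 0 < n → a 0 ≠ a 1)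
    (hlast : 0 < n → a (Fin.last (n + 1)) ≠ a ⟨n, by omega⟩) :
    (hyperH γ ((List.finRange n).map (fun i => a i.succ.castSucc)) none
        = hyperI γ ((List.finRange n).map (fun i => a i.succ.castSucc))) ∧
    (hyperH γ ((List.finRange n).map (fun i => a i.succ.castSucc)) (some x)
        = hyperI (fun u => 1 / (γ u - x))
            ((List.finRange n).map (fun i => 1 / (a i.succ.castSucc - x)))) := by
  constructor
  · rfl
  · have key := iterInt_transform γ hγ x hγx
      ((List.finRange n).map (fun i => a i.succ.castSucc))
      (by
        intro b hb
        simp only [List.mem_map] at hb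
        obtain ⟨i, _, rfl⟩ := hb
        exact hx _)
      1 ⟨zero_le_one, le_refl 1⟩
    simp only [List.map_map] at key ⊢
    rw [hyperH, hyperI, List.map_map, List.map_map]
    exact key.symm
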